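/- arXiv:1509.07898 — 2 statements merged into one kernel-verified Lean document; each statement's English description precedes it below -/
import Mathlib

section
/- For a natural number m ≥ 0, there exist k ≥ 1 and natural numbers 0 ≤ n_1 ≤ n_2 ≤ ... ≤ n_k such that L_{n_1}·L_{n_2}·...·L_{n_k} + 1 = F_m^2 if and only if 3 ≤ m ≤ 7, m = 10, or m = 14. -/
def lucas : ℕ → ℕ
  | 0 => 2
  | 1 => 1
  | n + 2 => lucas (n + 1) + lucas n

open Nat

lemma lucas_add_fib (n : ℕ) : lucas n + fib n = 2 * fib (n + 1) := by
  induction n using Nat.twoStepInduction with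
  | zero => simp [lucas]
  | one => simp [lucas]
  | more n ih1 ih2 =>
    rw [show lucas (n+2) = lucas (n+1) + lucas n from rfl, fib_add_two,
      show n+2+1 = n+1+2 from rfl, fib_add_two]
    omega

lemma lucas_pos (n : ℕ) : 0 < lucas n := by
  have h1 := lucas_add_fib n
  have h2 : 0 < fib (n+1) := fib_pos.2 n.succ_pos
  have h3 : fib n ≤ fib (n+1) := fib_le_fib_succ
  omega

lemma fib_two_mul_lucas (n : ℕ) : fib (2*n) = fib n * lucas n := by
  rw [fib_two_mul]
  congr 1
  have := lucas_add_fib n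
  omega

lemma dvd_two_of_dvd_fib_lucas {n d : ℕ} (h1 : d ∣ fib n) (h2 : d ∣ lucas n) : d ∣ 2 := by
  have h3 : d ∣ 2 * fib (n+1) := by
    rw [← lucas_add_fib n]; exact Dvd.dvd.add h2 h1
  have hco : Nat.Coprime d (fib (n+1)) :=
    Nat.Coprime.coprime_dvd_left h1 (fib_coprime_fib_succ n)
  exact hco.dvd_of_dvd_mul_right h3

lemma dvd_two_of_odd_dvd {c n d : ℕ} (hc : c % 2 = 1) (h1 : d ∣ fib c) (h2 : d ∣ lucas n) :
    d ∣ 2 := by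
  have hln : lucas n ∣ fib (2*n) := by rw [fib_two_mul_lucas]; exact Dvd.intro_left _ rfl
  have hd2n : d ∣ fib (2*n) := h2.trans hln
  have hgcd : d ∣ Nat.gcd (fib c) (fib (2*n)) := Nat.dvd_gcd h1 hd2n
  rw [← fib_gcd] at hgcd
  have hco2 : Nat.Coprime 2 c := (Nat.prime_two.coprime_iff_not_dvd).mpr (by omega)
  have hg : Nat.gcd c (2*n) = Nat.gcd c n := Nat.Coprime.gcd_mul_left_cancel_right n hco2
  rw [hg] at hgcd
  have hfn : fib (Nat.gcd c n) ∣ fib n := fib_dvd _ _ (Nat.gcd_dvd_right c n)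
  exact dvd_two_of_dvd_fib_lucas (hgcd.trans hfn) h2

lemma fib_mod4_period : ∀ c : ℕ, fib c % 4 = fib (c % 6) % 4 := by
  intro c
  induction c using Nat.strong_induction_on with
  | _ c ih =>
    rcases lt_or_ge c 6 with h | h
    · rw [Nat.mod_eq_of_lt h]
    · obtain ⟨d, rfl⟩ : ∃ d, c = d + 6 := ⟨c - 6, by omega⟩
      have h1 : fib (d + 5 + 1) = fib d * fib 5 + fib (d+1) * fib 6 := fib_add d 5
      have h2 := ih d (by omega)
      have h3 : (d + 6) % 6 = d % 6 := by omega
      rw [show d + 6 = d + 5 + 1 from rfl, h1, h3, show fib 5 = 5 from rfl,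
        show fib 6 = 8 from rfl]
      omega

lemma fib_odd_mod4 (c : ℕ) (hc : c % 2 = 1) : fib c % 4 = 1 ∨ fib c % 4 = 2 := by
  have h := fib_mod4_period c
  have h6 : c % 6 = 1 ∨ c % 6 = 3 ∨ c % 6 = 5 := by omega
  rcases h6 with h6 | h6 | h6 <;> rw [h6] at h <;> simp [show fib 1 = 1 from rfl,
    show fib 3 = 2 from rfl, show fib 5 = 5 from rfl] at h <;> omega

lemma main_key (l : List ℕ) (c : ℕ) (hc : c % 2 = 1)
    (hdvd : fib c ∣ (l.map lucas).prod) : c ≤ 3 := by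
  by_contra h
  push_neg at h
  have h5 : 5 ≤ c := by omega
  have hfib : 5 ≤ fib c := by
    calc 5 = fib 5 := rfl
    _ ≤ fib c := fib_mono h5
  have hmod := fib_odd_mod4 c hc
  -- produce an odd divisor q ≥ 2 of fib c
  obtain ⟨q, hq1, hq2, hq3⟩ : ∃ q, q % 2 = 1 ∧ 2 ≤ q ∧ q ∣ fib c := by
    rcases hmod with hm | hm
    · exact ⟨fib c, by omega, by omega, dvd_rfl⟩
    · refine ⟨fib c / 2, by omega, by omega, ⟨2, by omega⟩⟩
  have hp := Nat.minFac_prime (show q ≠ 1 by omega)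
  have hpd : q.minFac ∣ fib c := (Nat.minFac_dvd q).trans hq3
  have hpl : q.minFac ∣ (l.map lucas).prod := hpd.trans hdvd
  obtain ⟨x, hx, hpx⟩ := (hp.prime.dvd_prod_iff).mp hpl
  obtain ⟨y, hy, rfl⟩ := List.mem_map.mp hx
  have h2 : q.minFac ∣ 2 := dvd_two_of_odd_dvd hc hpd hpx
  have hle : q.minFac ≤ 2 := Nat.le_of_dvd (by norm_num) h2
  have hge : 2 ≤ q.minFac := hp.two_le
  have heq : q.minFac = 2 := by omega
  have : (2 : ℕ) ∣ q := heq ▸ Nat.minFac_dvd q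
  omega

lemma cassini : ∀ n : ℕ, fib (2*n) * fib (2*n+2) + 1 = fib (2*n+1)^2 ∧
    fib (2*n+1) * fib (2*n+3) = fib (2*n+2)^2 + 1 := by
  intro n
  induction n with
  | zero => decide
  | succ n ih =>
    obtain ⟨ih1, ih2⟩ := ih
    have e1 : fib (2*n+3) = fib (2*n+1) + fib (2*n+2) := fib_add_two
    have e2 : fib (2*n+4) = fib (2*n+2) + fib (2*n+3) := fib_add_two
    have e3 : fib (2*n+5) = fib (2*n+3) + fib (2*n+4) := fib_add_two
    have p1 : fib (2*n+2) * fib (2*n+4) + 1 = fib (2*n+3)^2 := by nlinarith [ih2, e1, e2]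
    have p2 : fib (2*n+3) * fib (2*n+5) = fib (2*n+4)^2 + 1 := by nlinarith [p1, e2, e3]
    exact ⟨p1, p2⟩

lemma cassini2 (n : ℕ) : fib (2*n) * fib (2*n+4) + 1 = fib (2*n+2)^2 := by
  obtain ⟨c1, c2⟩ := cassini n
  have e1 : fib (2*n+2) = fib (2*n) + fib (2*n+1) := fib_add_two
  have e2 : fib (2*n+3) = fib (2*n+1) + fib (2*n+2) := fib_add_two
  have e3 : fib (2*n+4) = fib (2*n+2) + fib (2*n+3) := fib_add_two
  nlinarith [c1, c2, e1, e2, e3]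

lemma odd_part : ∀ a : ℕ, 0 < a → ∃ s u, u % 2 = 1 ∧ a = 2^s * u := by
  intro a
  induction a using Nat.strong_induction_on with
  | _ a ih =>
    intro ha
    rcases (by omega : a % 2 = 0 ∨ a % 2 = 1) with he | ho
    · obtain ⟨b, rfl⟩ : ∃ b, a = 2 * b := ⟨a / 2, by omega⟩
      obtain ⟨s, u, hu, rfl⟩ := ih b (by omega) (by omega)
      exact ⟨s + 1, u, hu, by ring⟩
    · exact ⟨0, a, by omega, by ring⟩

lemma two_pow_odd_mod4 {s u : ℕ} (hu : u % 2 = 1) (h4 : (2^s * u) % 4 = 2) :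
    2^s * u = 2 * u := by
  match s with
  | 0 => simp at h4; omega
  | 1 => norm_num
  | s+2 =>
    exfalso
    have : 2^(s+2) * u = 4 * (2^s * u) := by ring
    omega

theorem lucas_prod_add_one_eq_fib_sq_iff (m : ℕ) :
    (∃ l : List ℕ, l ≠ [] ∧ l.Pairwise (· ≤ ·) ∧
        (l.map lucas).prod + 1 = Nat.fib m ^ 2) ↔
      ((3 ≤ m ∧ m ≤ 7) ∨ m = 10 ∨ m = 14) := by
  constructor
  · rintro ⟨l, hne, -, hP⟩
    have hPpos : 0 < (l.map lucas).prod := by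
      apply List.prod_pos
      intro x hx
      obtain ⟨y, -, rfl⟩ := List.mem_map.mp hx
      exact lucas_pos y
    rcases (by omega : m % 2 = 1 ∨ m % 2 = 0) with hpar | hpar
    · -- m odd
      obtain ⟨a, rfl⟩ : ∃ a, m = 2*a+1 := ⟨m / 2, by omega⟩
      have hc := (cassini a).1
      have hPe : (l.map lucas).prod = fib (2*a) * fib (2*a+2) := by omega
      rcases (by omega : a % 2 = 1 ∨ a % 2 = 0) with ha | ha
      · have hdvd : fib a ∣ (l.map lucas).prod := by
          rw [hPe]
          exact Dvd.dvd.mul_right (fib_dvd a (2*a) ⟨2, by ring⟩) _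
        have := main_key l a ha hdvd
        left; omega
      · have hdvd : fib (a+1) ∣ (l.map lucas).prod := by
          rw [hPe]
          exact Dvd.dvd.mul_left (fib_dvd (a+1) (2*a+2) ⟨2, by ring⟩) _
        have h3 := main_key l (a+1) (by omega) hdvd
        -- a = 0 or a = 2
        rcases (by omega : a = 0 ∨ a = 2) with rfl | rfl
        · exfalso
          have h1 : fib (2*0+1) ^ 2 = 1 := rfl
          omega
        · left; omega
    · -- m even
      rcases (by omega : m = 0 ∨ m = 2 ∨ (4 ≤ m ∧ m % 2 = 0)) with rfl | rfl | ⟨hm4, -⟩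
      · exfalso; simp at hP
      · exfalso
        have h1 : fib 2 ^ 2 = 1 := rfl
        omega
      · obtain ⟨a, ha1, rfl⟩ : ∃ a, 1 ≤ a ∧ m = 2*a+2 := ⟨(m-2)/2, by omega, by omega⟩
        have hc := cassini2 a
        have hPe : (l.map lucas).prod = fib (2*a) * fib (2*a+4) := by omega
        have hdvd1 : fib a ∣ (l.map lucas).prod := by
          rw [hPe]
          exact Dvd.dvd.mul_right (fib_dvd a (2*a) ⟨2, by ring⟩) _
        have hdvd2 : fib (a+2) ∣ (l.map lucas).prod := by
          rw [hPe]
          exact Dvd.dvd.mul_left (fib_dvd (a+2) (2*a+4) ⟨2, by ring⟩) _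
        rcases (by omega : a % 2 = 1 ∨ a % 2 = 0) with ha | ha
        · have t1 := main_key l a ha hdvd1
          have t2 := main_key l (a+2) (by omega) hdvd2
          left; omega
        · obtain ⟨s, u, hu, hsu⟩ := odd_part a (by omega)
          obtain ⟨t, v, hv, htv⟩ := odd_part (a+2) (by omega)
          have hud : fib u ∣ (l.map lucas).prod := by
            refine dvd_trans (fib_dvd u (2*a) ⟨2 * 2^s, by rw [hsu]; ring⟩) ?_
            rw [hPe]; exact Dvd.dvd.mul_right dvd_rfl _
          have hvd : fib v ∣ (l.map lucas).prod := by
            refine dvd_trans (fib_dvd v (2*a+4) ⟨2 * 2^t, by rw [show 2*a+4 = 2*(a+2) from by ring, htv]; ring⟩) ?_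
            rw [hPe]; exact Dvd.dvd.mul_left dvd_rfl _
          have hu3 := main_key l u hu hud
          have hv3 := main_key l v hv hvd
          rcases (by omega : a % 4 = 2 ∨ a % 4 = 0) with h4 | h4
          · have : 2^s * u = 2 * u := two_pow_odd_mod4 hu (by omega)
            omega
          · have : 2^t * v = 2 * v := two_pow_odd_mod4 hv (by omega)
            omega
  · rintro (⟨h3, h7⟩ | rfl | rfl)
    · interval_cases m
      · exact ⟨[2], by simp, by decide, by decide⟩
      · exact ⟨[0,0,0], by simp, by decide, by decide⟩
      · exact ⟨[0,2,3], by simp, by decide, by decide⟩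
      · exact ⟨[2,2,4], by simp, by decide, by decide⟩
      · exact ⟨[0,0,0,2,4], by simp, by decide, by decide⟩
    · exact ⟨[0,0,0,0,2,2,2,4], by simp, by decide, by decide⟩
    · exact ⟨[0,0,0,0,2,2,2,4,8], by simp, by decide, by decide⟩
end

section
/- For a natural number m ≥ 0, there exist k ≥ 1 and natural numbers 0 ≤ n_1 ≤ n_2 ≤ ... ≤ n_k such that L_{n_1}·L_{n_2}·...·L_{n_k} − 1 = F_m^2 if and only if 0 ≤ m ≤ 2. -/
open Nat

lemma lucas_succ_eq : ∀ n, lucas (n + 1) = fib n + fib (n + 2)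
  | 0 => by simp [lucas]
  | 1 => by simp [lucas]; rfl
  | n + 2 => by
    show lucas (n + 2) + lucas (n + 1) = _
    rw [lucas_succ_eq (n + 1), lucas_succ_eq n]
    show fib (n + 1) + fib (n + 3) + (fib n + fib (n + 2)) = fib (n + 2) + fib (n + 4)
    have a : fib (n + 2) = fib n + fib (n + 1) := fib_add_two
    have b : fib (n + 3) = fib (n + 1) + fib (n + 2) := by
      rw [show n + 3 = (n + 1) + 2 by ring]; exact fib_add_two
    have c : fib (n + 4) = fib (n + 2) + fib (n + 3) := by
      rw [show n + 4 = (n + 2) + 2 by ring]; exact fib_add_two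
    omega

lemma dId : ∀ n : ℕ, (fib (n + 1) : ℤ) ^ 2 - fib n * fib (n + 1) - (fib n : ℤ) ^ 2 = (-1) ^ n
  | 0 => by simp
  | n + 1 => by
    have h := dId n
    have h2 : (fib (n + 2) : ℤ) = fib n + fib (n + 1) := by
      rw [fib_add_two]; push_cast; ring
    rw [h2]
    linear_combination (-1 : ℤ) * h

lemma fib_mul_lucas : ∀ n, fib n * lucas n = fib (2 * n)
  | 0 => by simp
  | n + 1 => by
    rw [lucas_succ_eq]
    have h : fib (2 * (n + 1)) = fib n * fib (n + 1) + fib (n + 1) * fib (n + 2) := by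
      rw [show 2 * (n + 1) = n + (n + 1) + 1 by ring]
      exact fib_add n (n + 1)
    rw [h]; ring

lemma lucas_sq (n : ℕ) : (lucas n : ℤ) ^ 2 - 5 * (fib n : ℤ) ^ 2 = 4 * (-1) ^ n := by
  cases n with
  | zero => simp [lucas]
  | succ n =>
    have h := dId n
    have h2 : (lucas (n + 1) : ℤ) = 2 * fib n + fib (n + 1) := by
      rw [lucas_succ_eq, fib_add_two]; push_cast; ring
    rw [h2]
    linear_combination (-4 : ℤ) * h

lemma fib_mod_four (n : ℕ) : fib (n + 6) % 4 = fib n % 4 := by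
  have h : fib (n + 6) = 5 * fib n + 8 * fib (n + 1) := by
    rw [show n + 6 = n + 5 + 1 by ring, fib_add]; simp [fib]; ring
  omega

lemma fib_mod_four' : ∀ n, fib n % 4 = fib (n % 6) % 4 := by
  intro n
  induction n using Nat.strong_induction_on with
  | _ n ih =>
    rcases Nat.lt_or_ge n 6 with h | h
    · rw [Nat.mod_eq_of_lt h]
    · obtain ⟨k, rfl⟩ : ∃ k, n = k + 6 := ⟨n - 6, by omega⟩
      rw [fib_mod_four, ih k (by omega), Nat.add_mod_right]

lemma not_four_dvd_fib {r : ℕ} (hr : Odd r) : ¬ (4 ∣ fib r) := by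
  intro hdvd
  have h4 : fib r % 4 = 0 := by omega
  rw [fib_mod_four' r] at h4
  have h2 : r % 2 = 1 := Nat.odd_iff.mp hr
  have h6 : r % 6 = 1 ∨ r % 6 = 3 ∨ r % 6 = 5 := by omega
  rcases h6 with h | h | h <;> rw [h] at h4 <;> revert h4 <;> decide

/-- An odd prime dividing `fib r` with `r` odd divides no Lucas number. -/
lemma key {p r n : ℕ} (hp : p.Prime) (hp2 : p ≠ 2) (hr : Odd r)
    (hpr : p ∣ fib r) (hpl : p ∣ lucas n) : False := by
  have h1 : lucas n ∣ fib (2 * n) := ⟨fib n, by rw [← fib_mul_lucas]; ring⟩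
  have h2 : p ∣ fib (2 * n) := hpl.trans h1
  have h3 : p ∣ Nat.gcd (fib r) (fib (2 * n)) := Nat.dvd_gcd hpr h2
  rw [← fib_gcd] at h3
  have hcop : Nat.Coprime 2 r := Nat.coprime_two_left.mpr hr
  have h4 : Nat.gcd r (2 * n) = Nat.gcd r n := by
    rw [Nat.gcd_comm r (2 * n), Nat.gcd_comm r n]
    exact Nat.Coprime.gcd_mul_left_cancel n hcop
  rw [h4] at h3
  have h5 : p ∣ fib n := h3.trans (fib_dvd _ _ (Nat.gcd_dvd_right r n))
  have h6 : (p : ℤ) ∣ 4 * (-1) ^ n := by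
    rw [← lucas_sq n]
    exact dvd_sub (dvd_pow (Int.natCast_dvd_natCast.mpr hpl) two_ne_zero)
      (Dvd.dvd.mul_left (dvd_pow (Int.natCast_dvd_natCast.mpr h5) two_ne_zero) 5)
  have h7 : (p : ℤ) ∣ 4 := by
    rcases Nat.even_or_odd n with he | ho
    · rwa [he.neg_one_pow, mul_one] at h6
    · rw [ho.neg_one_pow, mul_neg_one] at h6
      rwa [dvd_neg] at h6
  have h8 : p ∣ 4 := by exact_mod_cast h7
  have h9 : p ∣ 2 := hp.dvd_of_dvd_pow (n := 2)
    (by rw [show (2 : ℕ) ^ 2 = 4 by norm_num]; exact h8)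
  exact hp2 ((Nat.prime_dvd_prime_iff_eq hp Nat.prime_two).mp h9)

lemma prime_dvd_list_prod {p : ℕ} (hp : p.Prime) :
    ∀ {l : List ℕ}, p ∣ (l.map lucas).prod → ∃ a ∈ l, p ∣ lucas a := by
  intro l
  induction l with
  | nil =>
    intro h
    rw [List.map_nil, List.prod_nil, Nat.dvd_one] at h
    exact absurd h hp.ne_one
  | cons a t ih =>
    intro h
    simp only [List.map_cons, List.prod_cons] at h
    rcases (Nat.Prime.dvd_mul hp).mp h with h1 | h2
    · exact ⟨a, List.mem_cons_self, h1⟩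
    · obtain ⟨b, hb, hd⟩ := ih h2
      exact ⟨b, List.mem_cons_of_mem a hb, hd⟩

lemma exists_odd_prime_dvd {N : ℕ} (h5 : 5 ≤ N) (h4 : ¬ 4 ∣ N) :
    ∃ p, p.Prime ∧ p ≠ 2 ∧ p ∣ N := by
  rcases Nat.even_or_odd N with he | ho
  · have he2 : N % 2 = 0 := Nat.even_iff.mp he
    obtain ⟨t, rfl⟩ : ∃ t, N = 2 * t := ⟨N / 2, by omega⟩
    have ht : t % 2 = 1 := by omega
    have ht1 : t ≠ 1 := by omega
    refine ⟨t.minFac, Nat.minFac_prime ht1, ?_, Dvd.dvd.mul_left (Nat.minFac_dvd t) 2⟩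
    intro hpe
    have hd := Nat.minFac_dvd t
    rw [hpe] at hd
    omega
  · have ho2 : N % 2 = 1 := Nat.odd_iff.mp ho
    refine ⟨N.minFac, Nat.minFac_prime (by omega), ?_, Nat.minFac_dvd N⟩
    intro hpe
    have hd := Nat.minFac_dvd N
    rw [hpe] at hd
    omega

theorem lucas_prod_sub_one_eq_fib_sq_iff (m : ℕ) :
    (∃ l : List ℕ, l ≠ [] ∧ l.Pairwise (· ≤ ·) ∧
        ((l.map lucas).prod : ℤ) - 1 = (Nat.fib m : ℤ) ^ 2) ↔
      m ≤ 2 := by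
  constructor
  · rintro ⟨l, -, -, heq⟩
    by_contra hm
    push_neg at hm
    have hP : (l.map lucas).prod = fib m ^ 2 + 1 := by
      have : ((l.map lucas).prod : ℤ) = (fib m : ℤ) ^ 2 + 1 := by linarith
      exact_mod_cast this
    obtain ⟨r, hrodd, hr5, hrdvd⟩ :
        ∃ r, Odd r ∧ 5 ≤ r ∧ fib r ∣ fib m ^ 2 + 1 := by
      rcases Nat.even_or_odd m with he | ho
      · -- m even ≥ 4 : fib m ^ 2 + 1 = fib (m-1) * fib (m+1)
        obtain ⟨n, rfl⟩ : ∃ n, m = n + 1 := ⟨m - 1, by omega⟩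
        have hn : n % 2 = 1 := by
          have := Nat.even_iff.mp he; omega
        refine ⟨n + 2, by rw [Nat.odd_iff]; omega, by omega, ?_⟩
        have hcas : fib n * fib (n + 2) = fib (n + 1) ^ 2 + 1 := by
          have h := dId n
          have hpow : ((-1 : ℤ)) ^ n = -1 := (Nat.odd_iff.mpr hn).neg_one_pow
          rw [hpow] at h
          have h2 : (fib (n + 2) : ℤ) = fib n + fib (n + 1) := by
            rw [fib_add_two]; push_cast; ring
          have : (fib n : ℤ) * fib (n + 2) = (fib (n + 1) : ℤ) ^ 2 + 1 := by
            rw [h2]; linear_combination -h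
          exact_mod_cast this
        exact ⟨fib n, by rw [← hcas]; ring⟩
      · -- m odd ≥ 3 : fib m ^ 2 + 1 = fib (m-2) * fib (m+2)
        obtain ⟨n, rfl⟩ : ∃ n, m = n + 2 := ⟨m - 2, by omega⟩
        have hn : n % 2 = 1 := by
          have := Nat.odd_iff.mp ho; omega
        refine ⟨n + 4, by rw [Nat.odd_iff]; omega, by omega, ?_⟩
        have hcas : fib n * fib (n + 4) = fib (n + 2) ^ 2 + 1 := by
          have h := dId n
          have hpow : ((-1 : ℤ)) ^ n = -1 := (Nat.odd_iff.mpr hn).neg_one_pow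
          rw [hpow] at h
          have h2 : (fib (n + 2) : ℤ) = fib n + fib (n + 1) := by
            rw [fib_add_two]; push_cast; ring
          have h3 : (fib (n + 3) : ℤ) = fib (n + 1) + fib (n + 2) := by
            rw [fib_add_two (n := n + 1)]; push_cast; ring
          have h4 : (fib (n + 4) : ℤ) = fib (n + 2) + fib (n + 3) := by
            rw [fib_add_two (n := n + 2)]; push_cast; ring
          have : (fib n : ℤ) * fib (n + 4) = (fib (n + 2) : ℤ) ^ 2 + 1 := by
            rw [h4, h3, h2]; linear_combination -h
          exact_mod_cast this
        exact ⟨fib n, by rw [← hcas]; ring⟩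
    have hfib5 : 5 ≤ fib r := by
      calc 5 = fib 5 := by decide
      _ ≤ fib r := fib_mono hr5
    obtain ⟨p, hp, hp2, hpdvd⟩ := exists_odd_prime_dvd hfib5 (not_four_dvd_fib hrodd)
    have hpprod : p ∣ (l.map lucas).prod := by
      rw [hP]; exact hpdvd.trans hrdvd
    obtain ⟨a, -, hpa⟩ := prime_dvd_list_prod hp hpprod
    exact key hp hp2 hrodd hpdvd hpa
  · intro hm
    interval_cases m
    · exact ⟨[1], by simp, List.pairwise_singleton _ 1, by simp [lucas]⟩
    · exact ⟨[0], by simp, List.pairwise_singleton _ 0, by simp [lucas]⟩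
    · exact ⟨[0], by simp, List.pairwise_singleton _ 0, by simp [lucas]⟩
end
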